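/- Suppose the system consists only of equalities (n_i = 0), A = A_= has full column rank, and Ax⋆ = b for some x⋆ ∈ ℝ^d (so S = {x⋆}). Let T be an (m, β) row paving of A, and let (x_j) be the iterates from an arbitrary x_0 obtained by choosing at each iteration a block τ uniformly at random from T (independently across iterations) and setting x_j equal to the orthogonal projection of x_{j−1} onto {x : A_τ x = b_τ}. Then for every j ≥ 1, E[‖x_j − x⋆‖²] ≤ (1 − σ_min²(A)/(βm))^j · ‖x_0 − x⋆‖², where σ_min(A) is the smallest singular value of A. -/

import Mathlib

open scoped RealInnerProductSpace BigOperators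

noncomputable section

/-- An `(m, β)` row paving of the rows of `a` indexed by `I`: a partition of `I` into `m`
nonempty blocks `T 0, …, T (m-1)` such that for each block `τ`, the row submatrix `A_τ` with
rows `(a i)_{i ∈ τ}` satisfies `λ_max(A_τ A_τ*) ≤ β`, stated equivalently as the quadratic
bound `‖A_τ x‖² = ∑_{i ∈ τ} ⟪a i, x⟫² ≤ β ‖x‖²` for all `x`. -/
def IsRowPaving {n d : ℕ} (a : Fin n → EuclideanSpace ℝ (Fin d)) (I : Finset (Fin n))
    (m : ℕ) (β : ℝ) (T : Fin m → Finset (Fin n)) : Prop :=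
  (∀ k, (T k).Nonempty) ∧
  (∀ k l, k ≠ l → Disjoint (T k) (T l)) ∧
  (Finset.univ.biUnion T = I) ∧
  (∀ k, ∀ x : EuclideanSpace ℝ (Fin d), ∑ i ∈ T k, ⟪a i, x⟫ ^ 2 ≤ β * ‖x‖ ^ 2)

/-- The random iterates of a Kaczmarz-type algorithm: given the outcomes `ω : Fin j → C` of
`j` independent random choices and an update map `step`, `kacIter step x0 j ω` is the `j`-th
iterate started from `x0`. -/
def kacIter {C V : Type*} (step : C → V → V) (x0 : V) : (j : ℕ) → (Fin j → C) → V
  | 0, _ => x0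
  | j + 1, ω => step (ω (Fin.last j)) (kacIter step x0 j fun k => ω k.castSucc)

/-- Auxiliary equivalence: decomposing a tuple of `j+1` choices into its first `j`
choices and its last choice, via `Fin.snoc`. -/
def snocChoiceEquiv (j m : ℕ) : ((Fin j → Fin m) × Fin m) ≃ (Fin (j+1) → Fin m) where
  toFun p := Fin.snoc p.1 p.2
  invFun ω := (fun i => ω i.castSucc, ω (Fin.last j))
  left_inv p := by
    refine Prod.ext ?_ ?_
    · funext i
      simp
    · simp
  right_inv ω := Fin.snoc_init_self ω

/-- **Theorem (randomized block Kaczmarz for consistent systems of equalities).**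
Suppose the standardized system consists only of equalities: `A` has full column rank and
`A x⋆ = b`, so the solution set is `{x⋆}`.  Let `T` be an `(m, β)` row paving of `A`, and
let the iterates be obtained from an arbitrary `x₀` by choosing at each iteration a block
`τ` uniformly at random from `T` (independently across iterations) and projecting
orthogonally onto `{x : A_τ x = b_τ}`.  Then for every `j ≥ 1`,
`𝔼[‖x_j − x⋆‖²] ≤ (1 − σ_min²(A)/(βm))^j ‖x₀ − x⋆‖²`, where `σ_min(A)` is the smallest
singular value of `A` (characterized as the greatest `t ≥ 0` with
`t² ‖x‖² ≤ ‖A x‖²` for all `x`). -/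
theorem block_kaczmarz_equalities_convergence
    {n d m : ℕ} (hm : 0 < m)
    (a : Fin n → EuclideanSpace ℝ (Fin d)) (b : Fin n → ℝ)
    (ha : ∀ i, ‖a i‖ = 1)
    -- A has full column rank
    (hrank : ∀ x : EuclideanSpace ℝ (Fin d), (∀ i, ⟪a i, x⟫ = 0) → x = 0)
    -- the system is consistent, with solution x⋆
    (xstar : EuclideanSpace ℝ (Fin d)) (hxstar : ∀ i, ⟪a i, xstar⟫ = b i)
    -- σmin is the smallest singular value of A
    (σmin : ℝ)
    (hσmin : IsGreatest {t : ℝ | 0 ≤ t ∧ ∀ x : EuclideanSpace ℝ (Fin d),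
      t ^ 2 * ‖x‖ ^ 2 ≤ ∑ i, ⟪a i, x⟫ ^ 2} σmin)
    -- an (m, β) row paving of A (of all of its rows)
    (β : ℝ) (hβ : 0 < β)
    (T : Fin m → Finset (Fin n))
    (hT : IsRowPaving a Finset.univ m β T)
    -- the one-step update: orthogonal projection onto {x : A_τ x = b_τ}
    (step : Fin m → EuclideanSpace ℝ (Fin d) → EuclideanSpace ℝ (Fin d))
    (hstep : ∀ (k : Fin m) (x : EuclideanSpace ℝ (Fin d)),
      (∀ i ∈ T k, ⟪a i, step k x⟫ = b i) ∧
      (∀ y : EuclideanSpace ℝ (Fin d), (∀ i ∈ T k, ⟪a i, y⟫ = b i) →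
        ‖x - step k x‖ ≤ ‖x - y‖))
    (x0 : EuclideanSpace ℝ (Fin d)) (j : ℕ) (hj : 1 ≤ j) :
    -- 𝔼[‖x_j − x⋆‖²], the block at each iteration being uniform on the m blocks:
    ∑ ω : Fin j → Fin m, (1 / (m : ℝ)) ^ j * ‖kacIter step x0 j ω - xstar‖ ^ 2 ≤
      (1 - σmin ^ 2 / (β * m)) ^ j * ‖x0 - xstar‖ ^ 2 := by
  obtain ⟨hne, hdisj, hcover, hpave⟩ := hT
  have hm' : (0:ℝ) < m := by exact_mod_cast hm
  set q : ℝ := 1 - σmin ^ 2 / (β * m) with hqdef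
  have hsum_split : ∀ x : EuclideanSpace ℝ (Fin d),
      ∑ i, ⟪a i, x⟫ ^ 2 = ∑ k : Fin m, ∑ i ∈ T k, ⟪a i, x⟫ ^ 2 := by
    intro x
    rw [← hcover, Finset.sum_biUnion]
    intro k _ l _ hkl
    exact hdisj k l hkl
  have hσβm : σmin ^ 2 ≤ β * m := by
    have hall : ∀ x : EuclideanSpace ℝ (Fin d),
        σmin ^ 2 * ‖x‖ ^ 2 ≤ β * m * ‖x‖ ^ 2 := by
      intro x
      calc σmin ^ 2 * ‖x‖ ^ 2 ≤ ∑ i, ⟪a i, x⟫ ^ 2 := hσmin.1.2 x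
        _ = ∑ k : Fin m, ∑ i ∈ T k, ⟪a i, x⟫ ^ 2 := hsum_split x
        _ ≤ ∑ k : Fin m, β * ‖x‖ ^ 2 := Finset.sum_le_sum fun k _ => hpave k x
        _ = β * m * ‖x‖ ^ 2 := by
            rw [Finset.sum_const, Finset.card_univ, Fintype.card_fin, nsmul_eq_mul]; ring
    rcases subsingleton_or_nontrivial (EuclideanSpace ℝ (Fin d)) with hs | hs
    · exfalso
      have hmem : σmin + 1 ∈ {t : ℝ | 0 ≤ t ∧ ∀ x : EuclideanSpace ℝ (Fin d),
          t ^ 2 * ‖x‖ ^ 2 ≤ ∑ i, ⟪a i, x⟫ ^ 2} := by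
        refine ⟨by linarith [hσmin.1.1], fun x => ?_⟩
        have hx0 : x = 0 := Subsingleton.elim x 0
        subst hx0
        simp
      have := hσmin.2 hmem
      linarith
    · obtain ⟨x, hx⟩ := exists_ne (0 : EuclideanSpace ℝ (Fin d))
      have hxpos : 0 < ‖x‖ ^ 2 := by
        have : 0 < ‖x‖ := norm_pos_iff.mpr hx
        positivity
      have := hall x
      nlinarith
  have hq0 : 0 ≤ q := by
    rw [hqdef]
    have hdle : σmin ^ 2 / (β * m) ≤ 1 := by
      rw [div_le_one (by positivity)]
      exact hσβm
    linarith
  -- one-step bound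
  have hone : ∀ x : EuclideanSpace ℝ (Fin d),
      ∑ k : Fin m, ‖step k x - xstar‖ ^ 2 ≤ ((m : ℝ) * q) * ‖x - xstar‖ ^ 2 := by
    intro x
    have hstep1 : ∀ k : Fin m,
        ‖step k x - xstar‖ ^ 2 ≤ ‖x - xstar‖ ^ 2
          - (1/β) * ∑ i ∈ T k, ⟪a i, x - xstar⟫ ^ 2 := by
      intro k
      set p := step k x with hp
      have hsol : ∀ i ∈ T k, ⟪a i, p⟫ = b i := (hstep k x).1
      have hmin := (hstep k x).2
      have horth : ∀ y : EuclideanSpace ℝ (Fin d), (∀ i ∈ T k, ⟪a i, y⟫ = b i) →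
          ⟪x - p, y - p⟫ = 0 := by
        intro y hy
        set c := ⟪x - p, y - p⟫ with hc
        set Q := ‖y - p‖ ^ 2 with hQ
        have hkey : ∀ t : ℝ, 0 ≤ t ^ 2 * Q - 2 * t * c := by
          intro t
          have hyt : ∀ i ∈ T k, ⟪a i, p + t • (y - p)⟫ = b i := by
            intro i hi
            rw [inner_add_right, real_inner_smul_right, inner_sub_right,
              hsol i hi, hy i hi]
            ring
          have h1 := hmin (p + t • (y - p)) hyt
          have h2 : ‖x - (p + t • (y - p))‖ ^ 2
              = ‖x - p‖ ^ 2 - 2 * t * c + t ^ 2 * Q := by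
            have hdec : x - (p + t • (y - p)) = (x - p) - t • (y - p) := by
              abel
            rw [hdec, norm_sub_sq_real, real_inner_smul_right, norm_smul]
            rw [hc, hQ]
            simp [mul_pow]
            ring
          have h3 : ‖x - p‖ ^ 2 ≤ ‖x - (p + t • (y - p))‖ ^ 2 :=
            pow_le_pow_left₀ (norm_nonneg _) h1 2
          linarith [h2 ▸ h3]
        have hQ0 : (0:ℝ) ≤ Q := by rw [hQ]; positivity
        rcases eq_or_lt_of_le hQ0 with hQ' | hQ'
        · have hyp : y - p = 0 := by
            have : ‖y - p‖ = 0 := by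
              have := hQ'.symm
              nlinarith [norm_nonneg (y - p)]
            exact norm_eq_zero.mp this
          rw [hc, hyp, inner_zero_right]
        · have hk := hkey (c / Q)
          have heq : (c / Q) ^ 2 * Q - 2 * (c / Q) * c = -(c ^ 2 / Q) := by
            field_simp
            ring
          rw [heq] at hk
          have h1 : c ^ 2 / Q ≤ 0 := by linarith
          have hc2 : c ^ 2 ≤ 0 := by
            have h2 : c ^ 2 = (c ^ 2 / Q) * Q := by field_simp
            rw [h2]
            exact mul_nonpos_of_nonpos_of_nonneg h1 hQ0
          have : c ^ 2 = 0 := le_antisymm hc2 (sq_nonneg c)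
          exact pow_eq_zero_iff two_ne_zero |>.mp this
      have hpyth : ‖x - xstar‖ ^ 2 = ‖x - p‖ ^ 2 + ‖p - xstar‖ ^ 2 := by
        have h0 : ⟪x - p, p - xstar⟫ = 0 := by
          have h1 := horth xstar (fun i _ => hxstar i)
          have h2 : ⟪x - p, -(xstar - p)⟫ = 0 := by rw [inner_neg_right, h1, neg_zero]
          rw [neg_sub] at h2
          exact h2
        have hdec : x - xstar = (x - p) + (p - xstar) := by abel
        rw [hdec, norm_add_sq_real, h0]
        ring
      have hres : ∑ i ∈ T k, ⟪a i, x - xstar⟫ ^ 2 ≤ β * ‖x - p‖ ^ 2 := by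
        have heqi : ∀ i ∈ T k, ⟪a i, x - xstar⟫ = ⟪a i, x - p⟫ := by
          intro i hi
          rw [inner_sub_right, inner_sub_right, hxstar i, hsol i hi]
        calc ∑ i ∈ T k, ⟪a i, x - xstar⟫ ^ 2
            = ∑ i ∈ T k, ⟪a i, x - p⟫ ^ 2 :=
              Finset.sum_congr rfl (fun i hi => by rw [heqi i hi])
          _ ≤ β * ‖x - p‖ ^ 2 := hpave k _
      have hdivb : (1/β) * ∑ i ∈ T k, ⟪a i, x - xstar⟫ ^ 2 ≤ ‖x - p‖ ^ 2 := by
        rw [one_div, inv_mul_le_iff₀ hβ]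
        exact hres
      linarith
    calc ∑ k : Fin m, ‖step k x - xstar‖ ^ 2
        ≤ ∑ k : Fin m, (‖x - xstar‖ ^ 2
            - (1/β) * ∑ i ∈ T k, ⟪a i, x - xstar⟫ ^ 2) :=
          Finset.sum_le_sum fun k _ => hstep1 k
      _ = (m : ℝ) * ‖x - xstar‖ ^ 2 - (1/β) * ∑ i, ⟪a i, x - xstar⟫ ^ 2 := by
          rw [Finset.sum_sub_distrib, ← Finset.mul_sum, ← hsum_split,
            Finset.sum_const, Finset.card_univ, Fintype.card_fin, nsmul_eq_mul]
      _ ≤ (m : ℝ) * ‖x - xstar‖ ^ 2 - (1/β) * (σmin ^ 2 * ‖x - xstar‖ ^ 2) := by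
          have h := hσmin.1.2 (x - xstar)
          have h1β : (0:ℝ) ≤ 1/β := by positivity
          nlinarith
      _ = ((m : ℝ) * q) * ‖x - xstar‖ ^ 2 := by
          rw [hqdef]
          field_simp
  clear hj
  induction j with
  | zero =>
      simp [kacIter]
  | succ j ih =>
      set e := snocChoiceEquiv j m with he
      have hsplit : ∑ ω : Fin (j+1) → Fin m,
            (1 / (m : ℝ)) ^ (j+1) * ‖kacIter step x0 (j+1) ω - xstar‖ ^ 2
          = ∑ ω : Fin j → Fin m, (1 / (m : ℝ)) ^ (j+1)
              * ∑ k : Fin m, ‖step k (kacIter step x0 j ω) - xstar‖ ^ 2 := by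
        rw [← Equiv.sum_comp e
          (fun ω => (1 / (m : ℝ)) ^ (j+1) * ‖kacIter step x0 (j+1) ω - xstar‖ ^ 2)]
        rw [Fintype.sum_prod_type]
        refine Finset.sum_congr rfl fun ω _ => ?_
        rw [Finset.mul_sum]
        refine Finset.sum_congr rfl fun k _ => ?_
        have hiter : kacIter step x0 (j+1) (Fin.snoc ω k) = step k (kacIter step x0 j ω) := by
          simp [kacIter, Fin.snoc_last, Fin.snoc_castSucc]
        rw [show e (ω, k) = Fin.snoc ω k from rfl, hiter]
      rw [hsplit]
      have hb : ∀ ω : Fin j → Fin m,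
          (1 / (m : ℝ)) ^ (j+1) * ∑ k : Fin m, ‖step k (kacIter step x0 j ω) - xstar‖ ^ 2
            ≤ q * ((1 / (m : ℝ)) ^ j * ‖kacIter step x0 j ω - xstar‖ ^ 2) := by
        intro ω
        have h := hone (kacIter step x0 j ω)
        have hpow : (0:ℝ) ≤ (1 / (m : ℝ)) ^ (j+1) := by positivity
        calc (1 / (m : ℝ)) ^ (j+1) * ∑ k : Fin m, ‖step k (kacIter step x0 j ω) - xstar‖ ^ 2
            ≤ (1 / (m : ℝ)) ^ (j+1) * (((m : ℝ) * q) * ‖kacIter step x0 j ω - xstar‖ ^ 2) :=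
              mul_le_mul_of_nonneg_left h hpow
          _ = q * ((1 / (m : ℝ)) ^ j * ‖kacIter step x0 j ω - xstar‖ ^ 2) := by
              rw [pow_succ]
              field_simp
      calc ∑ ω : Fin j → Fin m, (1 / (m : ℝ)) ^ (j+1)
            * ∑ k : Fin m, ‖step k (kacIter step x0 j ω) - xstar‖ ^ 2
          ≤ ∑ ω : Fin j → Fin m,
              q * ((1 / (m : ℝ)) ^ j * ‖kacIter step x0 j ω - xstar‖ ^ 2) :=
            Finset.sum_le_sum fun ω _ => hb ω
        _ = q * ∑ ω : Fin j → Fin m,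
              (1 / (m : ℝ)) ^ j * ‖kacIter step x0 j ω - xstar‖ ^ 2 := by
            rw [Finset.mul_sum]
        _ ≤ q * (q ^ j * ‖x0 - xstar‖ ^ 2) := mul_le_mul_of_nonneg_left ih hq0
        _ = q ^ (j+1) * ‖x0 - xstar‖ ^ 2 := by rw [pow_succ]; ring
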